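/- Fix a base b > 1, integers T ≥ 2 and 1 ≤ t ≤ T, and a constant c > 0. Let C_{t+1} be the value of the Morris counter after t increment operations. Then P( τ̃(C_{t+1}) > (e·t/(b − 1))·b^{√(2·c·log_b T) + 2} ) ≤ 1/T^{c}. -/

import Mathlib

open MeasureTheory ProbabilityTheory

lemma morris_aux_cdf {Ω : Type*} [MeasurableSpace Ω] (P : Measure Ω)
    (Vs : Ω → ℝ) (hm : Measurable Vs)
    (hu : P.map Vs = volume.restrict (Set.Icc (0:ℝ) 1)) (x : ℝ) (hx0 : 0 ≤ x) (hx1 : x ≤ 1) :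
    P {ω | Vs ω < x} = ENNReal.ofReal x := by
  have h1 : {ω | Vs ω < x} = Vs ⁻¹' Set.Iio x := rfl
  rw [h1, ← Measure.map_apply hm measurableSet_Iio, hu,
    Measure.restrict_apply measurableSet_Iio]
  have h2 : Set.Iio x ∩ Set.Icc (0:ℝ) 1 = Set.Ico 0 x := by
    ext y
    simp only [Set.mem_inter_iff, Set.mem_Iio, Set.mem_Icc, Set.mem_Ico]
    constructor
    · rintro ⟨h1, h2, h3⟩; exact ⟨h2, h1⟩
    · rintro ⟨h1, h2⟩; exact ⟨h2, h1, le_trans h2.le hx1⟩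
  rw [h2, Real.volume_Ico, sub_zero]

lemma morris_aux_crossing {Ω : Type*} (b : ℝ) (V : ℕ → Ω → ℝ) (C : ℕ → Ω → ℕ)
    (hCstep : ∀ s, 1 ≤ s → ∀ ω,
      C (s + 1) ω = if V s ω < (b ^ C s ω)⁻¹ then C s ω + 1 else C s ω)
    (ω : Ω) : ∀ u, 1 ≤ u → ∀ ℓ, C 1 ω ≤ ℓ → ℓ < C (u + 1) ω →
      ∃ s, 1 ≤ s ∧ s ≤ u ∧ C s ω = ℓ ∧ V s ω < (b ^ ℓ)⁻¹ := by
  intro u hu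
  induction u, hu using Nat.le_induction with
  | base =>
    intro ℓ h1 h2
    have hs := hCstep 1 le_rfl ω
    by_cases hv : V 1 ω < (b ^ C 1 ω)⁻¹
    · rw [if_pos hv] at hs
      have hℓ : ℓ = C 1 ω := by omega
      exact ⟨1, le_rfl, le_rfl, hℓ.symm, hℓ ▸ hv⟩
    · rw [if_neg hv] at hs; omega
  | succ u hu ih =>
    intro ℓ h1 h2
    by_cases hℓ : ℓ < C (u + 1) ω
    · obtain ⟨s, hs1, hs2, hs3, hs4⟩ := ih ℓ h1 hℓ
      exact ⟨s, hs1, le_trans hs2 (Nat.le_succ u), hs3, hs4⟩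
    · push_neg at hℓ
      have hs := hCstep (u + 1) (by omega) ω
      by_cases hv : V (u + 1) ω < (b ^ C (u + 1) ω)⁻¹
      · rw [if_pos hv] at hs
        have hℓ' : ℓ = C (u + 1) ω := by omega
        exact ⟨u + 1, by omega, le_rfl, hℓ'.symm, hℓ' ▸ hv⟩
      · rw [if_neg hv] at hs; omega

lemma morris_aux_numeric (b : ℝ) (hb : 1 < b) (T t : ℕ) (hT2 : 2 ≤ T) (ht1 : 1 ≤ t)
    (c : ℝ) (hc : 0 < c) (n₀ m : ℕ) (hm1 : 1 ≤ m)
    (hn : (t : ℝ) * b ≤ b ^ n₀)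
    (hm : 2 * (c * Real.logb b T) ≤ (m : ℝ) * (m + 1)) :
    (t : ℝ) ^ m * ∏ j : Fin m, ((b ^ (n₀ + (j : ℕ)))⁻¹) ≤ 1 / (T : ℝ) ^ c := by
  have hb0 : (0 : ℝ) < b := lt_trans one_pos hb
  have hT0 : (0 : ℝ) < T := by positivity
  have step1 : (t : ℝ) ^ m * ∏ j : Fin m, ((b ^ (n₀ + (j : ℕ)))⁻¹)
      = ∏ j : Fin m, ((t : ℝ) * (b ^ (n₀ + (j : ℕ)))⁻¹) := by
    rw [Finset.prod_mul_distrib, Finset.prod_const, Finset.card_univ, Fintype.card_fin]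
  have step2 : ∏ j : Fin m, ((t : ℝ) * (b ^ (n₀ + (j : ℕ)))⁻¹)
      ≤ ∏ j : Fin m, ((b ^ (1 + (j : ℕ)))⁻¹) := by
    apply Finset.prod_le_prod
    · intro j _; positivity
    · intro j _
      rw [← div_eq_mul_inv, ← one_div, div_le_div_iff₀ (by positivity) (by positivity),
        pow_add, pow_add, pow_one, one_mul]
      have hbj : (0 : ℝ) < b ^ (j : ℕ) := pow_pos hb0 _
      calc (t:ℝ) * (b * b ^ (j:ℕ)) = ((t:ℝ) * b) * b ^ (j:ℕ) := by ring
        _ ≤ b ^ n₀ * b ^ (j:ℕ) := by nlinarith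
  set K : ℕ := ∑ j : Fin m, (1 + (j : ℕ)) with hKdef
  have step3 : ∏ j : Fin m, ((b ^ (1 + (j : ℕ)))⁻¹) = (b ^ K)⁻¹ := by
    rw [Finset.prod_inv_distrib, Finset.prod_pow_eq_pow_sum]
  have hrw : ∀ x : ℝ, 0 < x → ((b : ℝ) ^ Real.logb b x) = x :=
    fun x hx => Real.rpow_logb hb0 (ne_of_gt hb) hx
  obtain ⟨k, rfl⟩ : ∃ k, m = k + 1 := ⟨m - 1, by omega⟩
  have hgauss := Finset.sum_range_id_mul_two (k + 1)
  have hKeq : K = (k + 1) + ∑ i ∈ Finset.range (k + 1), i := by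
    rw [hKdef, Fin.sum_univ_eq_sum_range]
    rw [Finset.sum_add_distrib, Finset.sum_const, Finset.card_range, smul_eq_mul, mul_one]
  have h2K : (K : ℝ) * 2 = ((k:ℝ) + 1) * ((k:ℝ) + 2) := by
    have h1 : K * 2 = (k + 1) * (k + 2) := by
      simp only [Nat.add_sub_cancel] at hgauss
      nlinarith [hgauss, hKeq]
    have := congrArg (fun n : ℕ => (n : ℝ)) h1
    push_cast at this
    linarith
  have hTc : (b : ℝ) ^ (Real.logb b T * c) = (T : ℝ) ^ c := by
    rw [Real.rpow_mul hb0.le, hrw _ hT0]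
  have hmain : (T : ℝ) ^ c ≤ (b : ℝ) ^ K := by
    have h1 : ((b : ℝ) ^ K) = b ^ ((K : ℕ) : ℝ) := (Real.rpow_natCast b K).symm
    rw [h1, ← hTc]
    apply (Real.rpow_le_rpow_left_iff hb).mpr
    push_cast at hm ⊢
    linarith [h2K]
  calc (t : ℝ) ^ (k+1) * ∏ j : Fin (k+1), ((b ^ (n₀ + (j : ℕ)))⁻¹)
      ≤ ∏ j : Fin (k+1), ((b ^ (1 + (j : ℕ)))⁻¹) := by rw [step1]; exact step2
    _ = (b ^ K)⁻¹ := step3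
    _ ≤ 1 / (T : ℝ) ^ c := by
        rw [one_div]
        have h1 : (0:ℝ) < (T:ℝ) ^ c := Real.rpow_pos_of_pos hT0 c
        have h2 : (0:ℝ) < b ^ K := pow_pos hb0 K
        exact inv_anti₀ h1 hmain

lemma morris_aux_indep {Ω : Type*} [MeasurableSpace Ω] (P : Measure Ω)
    (V : ℕ → Ω → ℝ) (hVindep : iIndepFun V P)
    (M : ℕ) (s : Fin M → ℕ) (hs : Function.Injective s) (x : ℕ → ℝ) :
    P (⋂ j : Fin M, V (s j) ⁻¹' Set.Iio (x (s j)))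
      = ∏ j : Fin M, P (V (s j) ⁻¹' Set.Iio (x (s j))) := by
  set g : ℕ → Set Ω := fun n => V n ⁻¹' Set.Iio (x n) with hg
  have h1 : (⋂ j : Fin M, V (s j) ⁻¹' Set.Iio (x (s j)))
      = ⋂ n ∈ Finset.image s Finset.univ, g n := by
    ext ω
    simp only [Set.mem_iInter, Finset.mem_image, Finset.mem_univ, true_and, g]
    constructor
    · rintro h n ⟨j, rfl⟩; exact h j
    · intro h j; exact h (s j) ⟨j, rfl⟩
  have h2 := hVindep.meas_biInter (S := Finset.image s Finset.univ) (s := g)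
    (fun n _ => ⟨Set.Iio (x n), measurableSet_Iio, rfl⟩)
  rw [h1, h2, Finset.prod_image (fun j _ j' _ h => hs h)]

set_option maxHeartbeats 1000000 in
/-- Upper-deviation bound for the Morris counter: after `t ≤ T` increments with base
`b > 1`, the estimate `τ̃(C_{t+1}) = (b^{C_{t+1}} - b)/(b - 1)` satisfies
`P(τ̃(C_{t+1}) > (e t/(b-1)) · b^{√(2 c log_b T) + 2}) ≤ 1/T^c` for every `c > 0`. -/
theorem morris_counter_upper_deviation
    {Ω : Type*} [MeasurableSpace Ω] (P : Measure Ω) [IsProbabilityMeasure P]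
    (b : ℝ) (hb : 1 < b) (T t : ℕ) (hT : 2 ≤ T) (ht1 : 1 ≤ t) (htT : t ≤ T)
    (c : ℝ) (hc : 0 < c)
    (V : ℕ → Ω → ℝ) (hVmeas : ∀ s, Measurable (V s))
    (hVindep : iIndepFun V P)
    (hVunif : ∀ s, P.map (V s) = volume.restrict (Set.Icc (0 : ℝ) 1))
    (C : ℕ → Ω → ℕ) (hCmeas : ∀ s, Measurable (C s))
    (hC1 : ∀ ω, C 1 ω = 1)
    (hCstep : ∀ s, 1 ≤ s → ∀ ω,
      C (s + 1) ω = if V s ω < (b ^ C s ω)⁻¹ then C s ω + 1 else C s ω) :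
    P {ω | (Real.exp 1 * t / (b - 1))
            * b ^ (Real.sqrt (2 * c * (Real.log T / Real.log b)) + 2)
          < (b ^ C (t + 1) ω - b) / (b - 1)}
      ≤ ENNReal.ofReal (1 / (T : ℝ) ^ c) := by
  have hb0 : (0:ℝ) < b := lt_trans one_pos hb
  have hb1 : (0:ℝ) < b - 1 := sub_pos.mpr hb
  have hlb : 0 < Real.log b := Real.log_pos hb
  have ht0 : (0:ℝ) < t := by exact_mod_cast ht1
  have hT0 : (0:ℝ) < T := by have : (0:ℕ) < T := by omega
                             exact_mod_cast this
  have hlogT : 0 < Real.log T := Real.log_pos (by exact_mod_cast hT)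
  set a := Real.sqrt (2 * c * (Real.log T / Real.log b)) with ha_def
  have harg : 0 ≤ 2 * c * (Real.log T / Real.log b) := by positivity
  have ha0 : 0 ≤ a := Real.sqrt_nonneg _
  have ha2 : a ^ 2 = 2 * c * (Real.log T / Real.log b) := Real.sq_sqrt harg
  set n₀ : ℕ := ⌈Real.logb b t⌉₊ + 1 with hn₀def
  set m : ℕ := ⌊a⌋₊ + 1 with hmdef
  have hm1 : 1 ≤ m := by omega
  haveI : Nonempty (Fin m) := ⟨⟨0, by omega⟩⟩
  have hlogbt : 0 ≤ Real.logb b t := Real.logb_nonneg hb (by exact_mod_cast ht1)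
  have hbn₀ : (t:ℝ) * b ≤ b ^ n₀ := by
    have h1 : (t:ℝ) ≤ b ^ (⌈Real.logb b t⌉₊ : ℕ) := by
      have h3 : (b:ℝ) ^ (⌈Real.logb b t⌉₊ : ℕ) = b ^ ((⌈Real.logb b t⌉₊ : ℕ) : ℝ) :=
        (Real.rpow_natCast b _).symm
      rw [h3]
      calc (t:ℝ) = b ^ Real.logb b t := (Real.rpow_logb hb0 (ne_of_gt hb) ht0).symm
        _ ≤ b ^ ((⌈Real.logb b t⌉₊ : ℕ) : ℝ) :=
            (Real.rpow_le_rpow_left_iff hb).mpr (Nat.le_ceil _)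
    calc (t:ℝ) * b ≤ b ^ (⌈Real.logb b t⌉₊ : ℕ) * b := by nlinarith
      _ = b ^ n₀ := by rw [hn₀def, pow_succ]
  -- Step 1: event inclusion into level event
  have hsub1 : {ω | (Real.exp 1 * t / (b - 1)) * b ^ (a + 2)
          < (b ^ C (t + 1) ω - b) / (b - 1)}
      ⊆ {ω | n₀ + m ≤ C (t + 1) ω} := by
    intro ω hω
    simp only [Set.mem_setOf_eq] at hω ⊢
    have hbr : (0:ℝ) < b ^ (a + 2) := Real.rpow_pos_of_pos hb0 _
    have h1 : Real.exp 1 * t * b ^ (a + 2) < b ^ C (t + 1) ω - b := by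
      rw [div_mul_eq_mul_div, div_lt_div_iff₀ hb1 hb1] at hω
      nlinarith [hω]
    have he : (1:ℝ) ≤ Real.exp 1 := Real.one_le_exp (by norm_num)
    have h2a : (0:ℝ) ≤ (Real.exp 1 - 1) * t * b ^ (a + 2) :=
      mul_nonneg (mul_nonneg (sub_nonneg.mpr he) ht0.le) hbr.le
    have h2 : (t:ℝ) * b ^ (a + 2) < (b:ℝ) ^ C (t + 1) ω := by nlinarith [h1, hb0, h2a]
    have h3 : Real.log t + (a + 2) * Real.log b
        < (C (t + 1) ω : ℝ) * Real.log b := by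
      have hll := Real.log_lt_log (by positivity) h2
      rwa [Real.log_mul (ne_of_gt ht0) (ne_of_gt hbr), Real.log_rpow hb0,
        Real.log_pow] at hll
    have h4 : Real.logb b t + a + 2 < (C (t + 1) ω : ℝ) := by
      have hrel : Real.logb b t * Real.log b = Real.log t :=
        div_mul_cancel₀ _ (ne_of_gt hlb)
      have hlt : (Real.logb b t + a + 2) * Real.log b
          < (C (t + 1) ω : ℝ) * Real.log b := by nlinarith
      exact lt_of_mul_lt_mul_right (by linarith [hlt]) hlb.le
    have hceil : (⌈Real.logb b t⌉₊ : ℝ) < Real.logb b t + 1 := Nat.ceil_lt_add_one hlogbt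
    have hfloor : (⌊a⌋₊ : ℝ) ≤ a := Nat.floor_le ha0
    have h5 : ((n₀ + m : ℕ) : ℝ) < (C (t + 1) ω : ℝ) + 1 := by
      rw [hn₀def, hmdef]
      push_cast
      linarith
    have h6 : n₀ + m < C (t + 1) ω + 1 := by exact_mod_cast h5
    omega
  -- Step 2: inclusion into union over increment patterns
  set F : Finset (Fin m → ℕ) :=
    (Fintype.piFinset fun _ : Fin m => Finset.Icc 1 t).filter Function.Injective with hF
  have hsub2 : {ω | n₀ + m ≤ C (t + 1) ω} ⊆
      ⋃ s ∈ F, ⋂ j : Fin m, V (s j) ⁻¹' Set.Iio ((b ^ (n₀ + (j:ℕ)))⁻¹) := by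
    intro ω hω
    simp only [Set.mem_setOf_eq] at hω
    have hchoice : ∀ j : Fin m, ∃ s, 1 ≤ s ∧ s ≤ t ∧ C s ω = n₀ + (j:ℕ) ∧
        V s ω < (b ^ (n₀ + (j:ℕ)))⁻¹ := by
      intro j
      have hj := j.isLt
      have h1 : C 1 ω ≤ n₀ + (j:ℕ) := by rw [hC1]; omega
      have h2 : n₀ + (j:ℕ) < C (t + 1) ω := by omega
      exact morris_aux_crossing b V C hCstep ω t ht1 _ h1 h2
    choose s hs1 hs2 hs3 hs4 using hchoice
    have hinj : Function.Injective s := by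
      intro j j' h
      have heq : n₀ + (j:ℕ) = n₀ + (j':ℕ) := by rw [← hs3 j, ← hs3 j', h]
      exact Fin.ext (by omega)
    refine Set.mem_iUnion₂.mpr ⟨s, ?_, ?_⟩
    · rw [hF]
      exact Finset.mem_filter.mpr
        ⟨Fintype.mem_piFinset.mpr (fun j => Finset.mem_Icc.mpr ⟨hs1 j, hs2 j⟩), hinj⟩
    · exact Set.mem_iInter.mpr (fun j => hs4 j)
  -- probability of atomic events
  have hA : ∀ n ℓ : ℕ, P (V n ⁻¹' Set.Iio ((b ^ ℓ)⁻¹))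
      = ENNReal.ofReal ((b ^ ℓ)⁻¹) := by
    intro n ℓ
    have hle : (b ^ ℓ)⁻¹ ≤ (1:ℝ) := by
      rw [inv_le_one_iff₀]
      right
      exact one_le_pow₀ hb.le
    exact morris_aux_cdf P (V n) (hVmeas n) (hVunif n) _ (by positivity) hle
  have hq : ∀ s ∈ F, P (⋂ j : Fin m, V (s j) ⁻¹' Set.Iio ((b ^ (n₀ + (j:ℕ)))⁻¹))
      = ∏ j : Fin m, ENNReal.ofReal ((b ^ (n₀ + (j:ℕ)))⁻¹) := by
    intro s hsF
    have hinj : Function.Injective s := (Finset.mem_filter.mp hsF).2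
    have hx := morris_aux_indep P V hVindep m s hinj
      (fun n => (b ^ (n₀ + ((Function.invFun s n : Fin m) : ℕ)))⁻¹)
    have hxe : ∀ j : Fin m, Function.invFun s (s j) = j :=
      fun j => Function.leftInverse_invFun hinj j
    simp only [hxe] at hx
    rw [hx]
    exact Finset.prod_congr rfl (fun j _ => hA (s j) _)
  have hcard : F.card ≤ t ^ m := by
    calc F.card ≤ (Fintype.piFinset fun _ : Fin m => Finset.Icc 1 t).card :=
          Finset.card_filter_le _ _
      _ = t ^ m := by
          simp [Fintype.card_piFinset, Nat.card_Icc]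
  have hnum := morris_aux_numeric b hb T t hT ht1 c hc n₀ m hm1 hbn₀ (by
    have ham : a ≤ (m:ℝ) := by
      have := Nat.lt_floor_add_one a
      rw [hmdef]; push_cast; linarith
    have hlogbT : Real.logb b T = Real.log T / Real.log b := rfl
    nlinarith [ha2, ha0, ham])
  calc P {ω | (Real.exp 1 * t / (b - 1)) * b ^ (a + 2)
          < (b ^ C (t + 1) ω - b) / (b - 1)}
      ≤ P (⋃ s ∈ F, ⋂ j : Fin m, V (s j) ⁻¹' Set.Iio ((b ^ (n₀ + (j:ℕ)))⁻¹)) :=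
        measure_mono (Set.Subset.trans hsub1 hsub2)
    _ ≤ ∑ s ∈ F, P (⋂ j : Fin m, V (s j) ⁻¹' Set.Iio ((b ^ (n₀ + (j:ℕ)))⁻¹)) :=
        measure_biUnion_finset_le F _
    _ = ∑ s ∈ F, ∏ j : Fin m, ENNReal.ofReal ((b ^ (n₀ + (j:ℕ)))⁻¹) :=
        Finset.sum_congr rfl hq
    _ = F.card • ∏ j : Fin m, ENNReal.ofReal ((b ^ (n₀ + (j:ℕ)))⁻¹) :=
        Finset.sum_const _
    _ ≤ (t ^ m) • ∏ j : Fin m, ENNReal.ofReal ((b ^ (n₀ + (j:ℕ)))⁻¹) := by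
        rw [nsmul_eq_mul, nsmul_eq_mul]
        exact mul_le_mul_left (by exact_mod_cast hcard) _
    _ = ENNReal.ofReal ((t:ℝ) ^ m * ∏ j : Fin m, ((b ^ (n₀ + (j:ℕ)))⁻¹)) := by
        rw [ENNReal.ofReal_mul (by positivity),
          ENNReal.ofReal_prod_of_nonneg (fun j _ => by positivity), nsmul_eq_mul]
        congr 1
        rw [← ENNReal.ofReal_natCast (t ^ m)]
        push_cast
        rfl
    _ ≤ ENNReal.ofReal (1 / (T:ℝ) ^ c) := ENNReal.ofReal_le_ofReal hnum
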